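/- Fix b > 0, K ∈ ℝ, and let λ₁ > 1 be the real root of λ³ = λ² + K²/(6b²). Then the symmetric matrix W̄₀ = [[1, −K/(2bλ₁), 0], [−K/(2bλ₁), 3λ₁−2, 0], [0, 0, 1]] is positive definite; in particular its determinant equals (3/λ₁²)(λ₁²/3 + K²/(12b²)) > 0. -/

import Mathlib

open Matrix

lemma quad_aux (lam1 c x0 x1 x2 : ℝ) (hl : lam1 > 1)
    (hc : c ^ 2 = 3 / 2 * (lam1 - 1))
    (h : x0 ≠ 0 ∨ x1 ≠ 0 ∨ x2 ≠ 0) :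
    0 < x0 * (x0 + -c * x1) + x1 * (-c * x0 + (3 * lam1 - 2) * x1) + x2 * x2 := by
  have key : x0 * (x0 + -c * x1) + x1 * (-c * x0 + (3 * lam1 - 2) * x1) + x2 * x2
      = (x0 - c * x1) ^ 2 + (3 * lam1 - 1) / 2 * x1 ^ 2 + x2 ^ 2 := by
    linear_combination (-(x1 ^ 2)) * hc
  rw [key]
  rcases h with h | h | h
  · nlinarith [sq_nonneg (x0 - 2 * c * x1), sq_nonneg (x0 - c * x1),
      mul_self_pos.mpr h, sq_nonneg x1, sq_nonneg x2, hc]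
  · nlinarith [sq_nonneg (x0 - c * x1), mul_self_pos.mpr h, sq_nonneg x2]
  · nlinarith [sq_nonneg (x0 - c * x1), sq_nonneg x1, mul_self_pos.mpr h]

/-- positive definiteness of the quadratic form `W̄₀` used in the
shear-adapted Povzner estimate, together with the determinant formula. -/
theorem stmt10 (b K : ℝ) (hb : 0 < b) (lam1 : ℝ)
    (hlam1 : lam1 > 1) (hroot : lam1 ^ 3 = lam1 ^ 2 + K ^ 2 / (6 * b ^ 2))
    (W0 : Matrix (Fin 3) (Fin 3) ℝ)
    (hW0 : W0 = !![1, -K / (2 * b * lam1), 0;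
                   -K / (2 * b * lam1), 3 * lam1 - 2, 0;
                   0, 0, 1]) :
    W0.PosDef ∧
    W0.det = 3 / lam1 ^ 2 * (lam1 ^ 2 / 3 + K ^ 2 / (12 * b ^ 2)) ∧
    0 < W0.det := by
  have hb2 : (0:ℝ) < b ^ 2 := by positivity
  have hl0 : (0:ℝ) < lam1 := by linarith
  have hK2 : K ^ 2 = 6 * b ^ 2 * (lam1 ^ 3 - lam1 ^ 2) := by
    field_simp at hroot
    nlinarith [hroot]
  have hc : (K / (2 * b * lam1)) ^ 2 = 3 / 2 * (lam1 - 1) := by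
    rw [div_pow, hK2]
    field_simp
    ring
  subst hW0
  have hdet : (!![1, -K / (2 * b * lam1), 0;
                   -K / (2 * b * lam1), 3 * lam1 - 2, 0;
                   0, 0, 1] : Matrix (Fin 3) (Fin 3) ℝ).det
      = 3 / lam1 ^ 2 * (lam1 ^ 2 / 3 + K ^ 2 / (12 * b ^ 2)) := by
    simp [Matrix.det_fin_three]
    field_simp
    nlinarith [hK2, sq_nonneg lam1, sq_nonneg b]
  have hgap0 : (0:ℝ) < 3 * lam1 - 2 - (K / (2 * b * lam1)) ^ 2 := by
    rw [hc]; linarith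
  refine ⟨Matrix.PosDef.of_dotProduct_mulVec_pos ?_ ?_, hdet, ?_⟩
  · ext i j
    fin_cases i <;> fin_cases j <;> simp [Matrix.conjTranspose_apply]
  · intro x hx
    obtain ⟨i, hi⟩ := Function.ne_iff.mp hx
    simp only [Pi.zero_apply] at hi
    have h3 : x 0 ≠ 0 ∨ x 1 ≠ 0 ∨ x 2 ≠ 0 := by
      fin_cases i
      exacts [Or.inl hi, Or.inr (Or.inl hi), Or.inr (Or.inr hi)]
    simp [Matrix.mulVec, dotProduct, Fin.sum_univ_three]
    have hrw : -K / (2 * b * lam1) = -(K / (2 * b * lam1)) := by ring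
    rw [hrw]
    exact quad_aux lam1 (K / (2 * b * lam1)) (x 0) (x 1) (x 2) hlam1 hc h3
  · rw [hdet]
    have h1 : (0:ℝ) ≤ K ^ 2 / (12 * b ^ 2) := by positivity
    have h2 : (0:ℝ) < lam1 ^ 2 := by positivity
    have h3 : (0:ℝ) < lam1 ^ 2 / 3 + K ^ 2 / (12 * b ^ 2) := by linarith
    positivity
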